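/- Fix d ≥ 1 and matrices S, L, H in M_d(ℂ) with H Hermitian (H = H*), and let ξ₁ : ℝ → ℂ be any function. Suppose ϱ⁰⁰, ϱ⁰¹, ϱ¹⁰ : ℝ → M_d(ℂ) are differentiable on [0,∞) and satisfy, for all t ≥ 0: (ϱ⁰⁰)'(t) = 𝓓₀₀(ϱ⁰⁰(t)); (ϱ⁰¹)'(t) = 𝓓₀₀(ϱ⁰¹(t)) + conj(ξ₁(t))·𝓓₁₀(ϱ⁰⁰(t)); (ϱ¹⁰)'(t) = 𝓓₀₀(ϱ¹⁰(t)) + ξ₁(t)·𝓓₀₁(ϱ⁰⁰(t)); with initial conditions ϱ⁰⁰(0) = (ϱ⁰⁰(0))* and ϱ¹⁰(0) = (ϱ⁰¹(0))*. Then for every t ≥ 0: ϱ⁰⁰(t) = (ϱ⁰⁰(t))* and ϱ¹⁰(t) = (ϱ⁰¹(t))*. -/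

import Mathlib

open Matrix

noncomputable section

/-- Commutator `[A,B] = AB - BA`. -/
def mcomm {d : ℕ} (A B : Matrix (Fin d) (Fin d) ℂ) : Matrix (Fin d) (Fin d) ℂ :=
  A * B - B * A

/-- Heisenberg-picture superoperator `𝓛₀₀(X) = ½ L*[X,L] + ½ [L*,X]L − i[X,H]`. -/
def L00 {d : ℕ} (L H X : Matrix (Fin d) (Fin d) ℂ) : Matrix (Fin d) (Fin d) ℂ :=
  (1/2 : ℂ) • (Lᴴ * mcomm X L) + (1/2 : ℂ) • (mcomm Lᴴ X * L) - Complex.I • mcomm X H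

/-- Heisenberg-picture superoperator `𝓛₀₁(X) = [L*,X]S`. -/
def L01 {d : ℕ} (S L X : Matrix (Fin d) (Fin d) ℂ) : Matrix (Fin d) (Fin d) ℂ :=
  mcomm Lᴴ X * S

/-- Heisenberg-picture superoperator `𝓛₁₀(X) = S*[X,L]`. -/
def L10 {d : ℕ} (S L X : Matrix (Fin d) (Fin d) ℂ) : Matrix (Fin d) (Fin d) ℂ :=
  Sᴴ * mcomm X L

/-- Heisenberg-picture superoperator `𝓛₁₁(X) = S*XS − X`. -/
def L11 {d : ℕ} (S X : Matrix (Fin d) (Fin d) ℂ) : Matrix (Fin d) (Fin d) ℂ :=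
  Sᴴ * X * S - X

/-- Schrödinger-picture superoperator `𝓓₀₀(ϱ) = ½[Lϱ,L*] + ½[L,ϱL*] − i[H,ϱ]`. -/
def D00 {d : ℕ} (L H ϱ : Matrix (Fin d) (Fin d) ℂ) : Matrix (Fin d) (Fin d) ℂ :=
  (1/2 : ℂ) • mcomm (L * ϱ) Lᴴ + (1/2 : ℂ) • mcomm L (ϱ * Lᴴ) - Complex.I • mcomm H ϱ

/-- Schrödinger-picture superoperator `𝓓₀₁(ϱ) = [Sϱ,L*]`. -/
def D01 {d : ℕ} (S L ϱ : Matrix (Fin d) (Fin d) ℂ) : Matrix (Fin d) (Fin d) ℂ :=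
  mcomm (S * ϱ) Lᴴ

/-- Schrödinger-picture superoperator `𝓓₁₀(ϱ) = [L,ϱS*]`. -/
def D10 {d : ℕ} (S L ϱ : Matrix (Fin d) (Fin d) ℂ) : Matrix (Fin d) (Fin d) ℂ :=
  mcomm L (ϱ * Sᴴ)

/-- Schrödinger-picture superoperator `𝓓₁₁(ϱ) = SϱS* − ϱ`. -/
def D11 {d : ℕ} (S ϱ : Matrix (Fin d) (Fin d) ℂ) : Matrix (Fin d) (Fin d) ℂ :=
  S * ϱ * Sᴴ - ϱ

lemma D00_sub {d : ℕ} (L H X Y : Matrix (Fin d) (Fin d) ℂ) :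
    D00 L H (X - Y) = D00 L H X - D00 L H Y := by
  simp only [D00, mcomm, mul_sub, sub_mul, smul_sub]
  module

lemma D00_smul {d : ℕ} (L H : Matrix (Fin d) (Fin d) ℂ) (c : ℝ) (X : Matrix (Fin d) (Fin d) ℂ) :
    D00 L H (c • X) = c • D00 L H X := by
  simp only [D00, mcomm, mul_smul_comm, smul_mul_assoc, smul_sub, smul_add]
  module

lemma D00_add {d : ℕ} (L H X Y : Matrix (Fin d) (Fin d) ℂ) :
    D00 L H (X + Y) = D00 L H X + D00 L H Y := by
  simp only [D00, mcomm, mul_add, add_mul, smul_add]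
  module

lemma D00_conjT {d : ℕ} (L H : Matrix (Fin d) (Fin d) ℂ) (hH : Hᴴ = H)
    (ϱ : Matrix (Fin d) (Fin d) ℂ) : (D00 L H ϱ)ᴴ = D00 L H ϱᴴ := by
  simp only [D00, mcomm, conjTranspose_sub, conjTranspose_add, conjTranspose_smul,
    conjTranspose_mul, conjTranspose_conjTranspose, hH, Complex.conj_I, star_div₀, star_one,
    star_ofNat, Complex.star_def, neg_smul, sub_neg_eq_add, smul_sub, mul_assoc]
  module

lemma D10_conjT {d : ℕ} (S L : Matrix (Fin d) (Fin d) ℂ) (ξ : ℂ)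
    (ϱ : Matrix (Fin d) (Fin d) ℂ) :
    ((starRingEnd ℂ) ξ • D10 S L ϱ)ᴴ = ξ • D01 S L ϱᴴ := by
  simp [D10, D01, mcomm, conjTranspose_sub, conjTranspose_smul, conjTranspose_mul, mul_assoc]

lemma linear_ODE_zero {E : Type*} [NormedAddCommGroup E] [NormedSpace ℝ E]
    [FiniteDimensional ℝ E] (A : E →ₗ[ℝ] E) (f : ℝ → E)
    (hf : ∀ t, 0 ≤ t → HasDerivAt f (A (f t)) t) (h0 : f 0 = 0) :
    ∀ t, 0 ≤ t → f t = 0 := by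
  intro t ht
  set A' := LinearMap.toContinuousLinearMap A with hA'
  have key : Set.EqOn f (fun _ => (0 : E)) (Set.Icc 0 t) := by
    apply ODE_solution_unique (v := fun _ x => A' x) (K := ‖A'‖₊)
    · intro s; exact A'.lipschitz
    · intro x hx; exact (hf x hx.1).continuousAt.continuousWithinAt
    · intro x hx; exact (hf x hx.1).hasDerivWithinAt
    · exact continuousOn_const
    · intro x hx
      simpa using (hasDerivWithinAt_const x (Set.Ici x) (0 : E))
    · simpa using h0
  exact key ⟨ht, le_rfl⟩

/-- Along the `(00;00)`, `(00;10)`, `(10;00)` components of the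
two-photon master hierarchy (with `H` Hermitian), Hermitian symmetry of the initial data
propagates: `ϱ⁰⁰(t) = ϱ⁰⁰(t)*` and `ϱ¹⁰(t) = (ϱ⁰¹(t))*` for all `t ≥ 0`. -/
theorem hermitian_symmetry_propagates
    (d : ℕ) (hd : 1 ≤ d) (S L H : Matrix (Fin d) (Fin d) ℂ)
    (hH : Hᴴ = H) (ξ₁ : ℝ → ℂ)
    (ϱ00 ϱ01 ϱ10 : ℝ → Matrix (Fin d) (Fin d) ℂ)
    (h00 : ∀ t, 0 ≤ t → ∀ i j : Fin d,
      HasDerivAt (fun s => ϱ00 s i j) ((D00 L H (ϱ00 t)) i j) t)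
    (h01 : ∀ t, 0 ≤ t → ∀ i j : Fin d,
      HasDerivAt (fun s => ϱ01 s i j)
        ((D00 L H (ϱ01 t) + (starRingEnd ℂ) (ξ₁ t) • D10 S L (ϱ00 t)) i j) t)
    (h10 : ∀ t, 0 ≤ t → ∀ i j : Fin d,
      HasDerivAt (fun s => ϱ10 s i j)
        ((D00 L H (ϱ10 t) + ξ₁ t • D01 S L (ϱ00 t)) i j) t)
    (hi00 : ϱ00 0 = (ϱ00 0)ᴴ) (hi10 : ϱ10 0 = (ϱ01 0)ᴴ) :
    ∀ t, 0 ≤ t → ϱ00 t = (ϱ00 t)ᴴ ∧ ϱ10 t = (ϱ01 t)ᴴ := by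
  let A00 : (Fin d → Fin d → ℂ) →ₗ[ℝ] (Fin d → Fin d → ℂ) :=
    { toFun := fun X => D00 L H (X : Matrix (Fin d) (Fin d) ℂ)
      map_add' := fun X Y => D00_add L H X Y
      map_smul' := fun c X => D00_smul L H c X }
  have hA00 : ∀ X : Matrix (Fin d) (Fin d) ℂ, A00 X = D00 L H X := fun _ => rfl
  -- step 1
  let F : ℝ → (Fin d → Fin d → ℂ) := fun s => (ϱ00 s - (ϱ00 s)ᴴ : Matrix (Fin d) (Fin d) ℂ)
  have hF : ∀ t, 0 ≤ t → HasDerivAt F (A00 (F t)) t := by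
    intro t ht
    rw [hasDerivAt_pi]; intro i
    rw [hasDerivAt_pi]; intro j
    have h1 := (h00 t ht i j).sub ((h00 t ht j i).star)
    convert h1 using 1
    · funext x; rfl
    have e : A00 (F t) = D00 L H (ϱ00 t) - (D00 L H (ϱ00 t))ᴴ := by
      rw [show F t = (ϱ00 t - (ϱ00 t)ᴴ : Matrix (Fin d) (Fin d) ℂ) from rfl,
        hA00, D00_sub, D00_conjT L H hH]
    show A00 (F t) i j = _
    rw [e]
    simp [Matrix.sub_apply, Matrix.conjTranspose_apply]
  have hF0 : F 0 = 0 := by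
    show (ϱ00 0 - (ϱ00 0)ᴴ : Matrix (Fin d) (Fin d) ℂ) = 0
    rw [sub_eq_zero]; exact hi00
  have hFz := linear_ODE_zero A00 F hF hF0
  have h00sym : ∀ t, 0 ≤ t → ϱ00 t = (ϱ00 t)ᴴ := by
    intro t ht
    have := hFz t ht
    have : (ϱ00 t - (ϱ00 t)ᴴ : Matrix (Fin d) (Fin d) ℂ) = 0 := this
    exact sub_eq_zero.mp this
  -- step 2
  let G : ℝ → (Fin d → Fin d → ℂ) := fun s => (ϱ10 s - (ϱ01 s)ᴴ : Matrix (Fin d) (Fin d) ℂ)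
  have hG : ∀ t, 0 ≤ t → HasDerivAt G (A00 (G t)) t := by
    intro t ht
    rw [hasDerivAt_pi]; intro i
    rw [hasDerivAt_pi]; intro j
    have h1 := (h10 t ht i j).sub ((h01 t ht j i).star)
    convert h1 using 1
    · funext x; rfl
    have e : A00 (G t) = (D00 L H (ϱ10 t) + ξ₁ t • D01 S L (ϱ00 t))
        - (D00 L H (ϱ01 t) + (starRingEnd ℂ) (ξ₁ t) • D10 S L (ϱ00 t))ᴴ := by
      rw [show G t = (ϱ10 t - (ϱ01 t)ᴴ : Matrix (Fin d) (Fin d) ℂ) from rfl,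
        hA00, D00_sub, conjTranspose_add, D00_conjT L H hH, D10_conjT, ← h00sym t ht]
      abel
    show A00 (G t) i j = _
    rw [e]
    simp [Matrix.sub_apply, Matrix.conjTranspose_apply]
  have hG0 : G 0 = 0 := by
    show (ϱ10 0 - (ϱ01 0)ᴴ : Matrix (Fin d) (Fin d) ℂ) = 0
    rw [sub_eq_zero]; exact hi10
  have hGz := linear_ODE_zero A00 G hG hG0
  intro t ht
  refine ⟨h00sym t ht, ?_⟩
  have : (ϱ10 t - (ϱ01 t)ᴴ : Matrix (Fin d) (Fin d) ℂ) = 0 := hGz t ht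
  exact sub_eq_zero.mp this
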